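/- Let G be a polygon graph with cycle of length k and let ω ∈ τ(G) be the degree-2 element with value 1 on every cycle edge, value 2 on a specified set S of cycle legs, and value 0 on the remaining cycle legs. Then ω is a sum of two degree-1 elements (networks) of τ(G) if and only if |S| is even. -/

import Mathlib

/-!
Common setup: finite (multi)graphs with ordered boundary maps `fst`, `snd`
(the boundary is morally unordered; loops and multiple edges are allowed).
-/

structure TGraph where
  V : Type
  E : Type
  [fintV : Fintype V]
  [fintE : Fintype E]
  [decV : DecidableEq V]
  [decE : DecidableEq E]
  fst : E → V
  snd : E → V

namespace TGraph

variable (G : TGraph)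

instance : Fintype G.V := G.fintV
instance : Fintype G.E := G.fintE
instance : DecidableEq G.V := G.decV
instance : DecidableEq G.E := G.decE

/-- Number of endpoints of `e` equal to `v` (a loop counts twice). -/
def mult (v : G.V) (e : G.E) : ℕ :=
  (if G.fst e = v then 1 else 0) + (if G.snd e = v then 1 else 0)

/-- Valency of a vertex (a loop contributes two). -/
def degree (v : G.V) : ℕ := ∑ e, G.mult v e

/-- A leaf is a vertex incident to exactly one edge (valency one). -/
def IsLeaf (v : G.V) : Prop := G.degree v = 1

instance : DecidablePred G.IsLeaf := fun v => inferInstanceAs (Decidable (G.degree v = 1))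

/-- A graph is trivalent when every non-leaf vertex has valency three. -/
def Trivalent : Prop := ∀ v, G.degree v = 1 ∨ G.degree v = 3

/-- The number of leaves. -/
def numLeaves : ℕ := Fintype.card {v : G.V // G.IsLeaf v}

/-- The number of inner (non-leaf) vertices. -/
def numInner : ℕ := Fintype.card {v : G.V // ¬ G.IsLeaf v}

/-- The number of connected components. -/
noncomputable def components : ℕ :=
  Nat.card (Quot fun v w : G.V =>
    ∃ e, (G.fst e = v ∧ G.snd e = w) ∨ (G.fst e = w ∧ G.snd e = v))

/-- The first Betti number, computed via the Euler characteristic: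
`g = |E| - |V| + c`. -/
noncomputable def betti : ℤ := (Fintype.card G.E : ℤ) - Fintype.card G.V + G.components

/-- The value of the vertex functional `v = Σ_{e ∋ v} e*` on an edge labeling. -/
def vsum (v : G.V) (u : G.E → ℤ) : ℤ := ∑ e, (G.mult v e : ℤ) * u e

/-- Membership in the graded lattice `M^gr = ℤ ⊕ M`: the edge labeling has even
sum at every inner vertex. -/
def InMgr (ω : ℤ × (G.E → ℤ)) : Prop :=
  ∀ v, ¬ G.IsLeaf v → Even (G.vsum v ω.2)

/-- Membership in the graded cone `τ(G) ⊂ ℤ ⊕ M`: nonnegative degree and edge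
values, parity at inner vertices, the triangle inequalities at every inner
vertex (encoded as: twice each incident value is at most the local sum), and
the degree bound `deg ω ≥ deg_v ω` at every inner vertex. -/
def InCone (ω : ℤ × (G.E → ℤ)) : Prop :=
  0 ≤ ω.1 ∧ (∀ e, 0 ≤ ω.2 e) ∧
  ∀ v, ¬ G.IsLeaf v →
    Even (G.vsum v ω.2) ∧
    (∀ e, G.mult v e ≠ 0 → 2 * ω.2 e ≤ G.vsum v ω.2) ∧
    G.vsum v ω.2 ≤ 2 * ω.1

/-- A network: a 0-1 edge labeling with even local sum at every inner vertex.
For trivalent graphs this is exactly a disjoint union of leaf-to-leaf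
edge-paths and cycles. -/
def IsNetwork (u : G.E → ℤ) : Prop :=
  (∀ e, u e = 0 ∨ u e = 1) ∧ ∀ v, ¬ G.IsLeaf v → Even (G.vsum v u)

end TGraph

/-- Cyclic successor on `Fin k`. -/
def cnext {k : ℕ} (i : Fin k) : Fin k := ⟨(i.val + 1) % k, Nat.mod_lt _ i.pos⟩

/-- The polygon graph with `k` cycle edges and `k` cycle legs: cycle vertices
`Sum.inl i`, leaf vertices `Sum.inr i`; cycle edges `Sum.inl i` (from cycle
vertex `i` to cycle vertex `i+1`) and cycle legs `Sum.inr i` (from cycle vertex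
`i` to the `i`-th leaf). -/
def polygon (k : ℕ) : TGraph where
  V := Fin k ⊕ Fin k
  E := Fin k ⊕ Fin k
  fst := Sum.elim (fun i => Sum.inl i) (fun i => Sum.inl i)
  snd := Sum.elim (fun i => Sum.inl (cnext i)) (fun i => Sum.inr i)

def cprev {k : ℕ} (i : Fin k) : Fin k := ⟨(i.val + (k-1)) % k, Nat.mod_lt _ i.pos⟩

lemma cnext_cprev {k : ℕ} (i : Fin k) : cnext (cprev i) = i := by
  have hk := i.pos
  apply Fin.ext
  show ((i.val + (k-1)) % k + 1) % k = i.val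
  rw [Nat.mod_add_mod]
  have : i.val + (k-1) + 1 = i.val + k := by omega
  rw [this, Nat.add_mod_right, Nat.mod_eq_of_lt i.isLt]

lemma cprev_cnext {k : ℕ} (i : Fin k) : cprev (cnext i) = i := by
  have hk := i.pos
  apply Fin.ext
  show ((i.val + 1) % k + (k-1)) % k = i.val
  rw [Nat.mod_add_mod]
  have : i.val + 1 + (k-1) = i.val + k := by omega
  rw [this, Nat.add_mod_right, Nat.mod_eq_of_lt i.isLt]

def cprevEquiv (k : ℕ) : Fin k ≃ Fin k := ⟨cprev, cnext, cnext_cprev, cprev_cnext⟩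

lemma sum_polyE {M : Type*} [AddCommMonoid M] (k : ℕ) (f : (polygon k).E → M) :
    ∑ e, f e = ∑ j : Fin k, f (Sum.inl j) + ∑ j : Fin k, f (Sum.inr j) :=
  Fintype.sum_sum_type f

lemma mult_inl_inl (k : ℕ) (i j : Fin k) :
    (polygon k).mult (Sum.inl i) (Sum.inl j)
      = (if j = i then 1 else 0) + (if j = cprev i then 1 else 0) := by
  unfold TGraph.mult polygon
  simp only [Sum.elim_inl, Sum.inl.injEq]
  congr 1
  by_cases h : cnext j = i
  · rw [if_pos h, if_pos (by rw [← h, cprev_cnext])]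
  · rw [if_neg h, if_neg (by rintro rfl; exact h (cnext_cprev i))]

lemma mult_inl_inr (k : ℕ) (i j : Fin k) :
    (polygon k).mult (Sum.inl i) (Sum.inr j) = if j = i then 1 else 0 := by
  unfold TGraph.mult polygon
  simp [Sum.inl.injEq]

lemma vsum_inl (k : ℕ) (i : Fin k) (u : (polygon k).E → ℤ) :
    (polygon k).vsum (Sum.inl i) u
      = u (Sum.inl i) + u (Sum.inl (cprev i)) + u (Sum.inr i) := by
  unfold TGraph.vsum
  rw [sum_polyE]
  simp only [mult_inl_inl, mult_inl_inr]
  push_cast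
  simp only [add_mul, ite_mul, one_mul, zero_mul]
  rw [Finset.sum_add_distrib]
  simp [Finset.sum_ite_eq', add_assoc]

lemma not_leaf_inl (k : ℕ) (i : Fin k) : ¬ (polygon k).IsLeaf (Sum.inl i) := by
  unfold TGraph.IsLeaf TGraph.degree
  rw [sum_polyE]
  simp only [mult_inl_inl, mult_inl_inr]
  rw [Finset.sum_add_distrib]
  simp [Finset.sum_ite_eq']

lemma leaf_inr (k : ℕ) (i : Fin k) : (polygon k).IsLeaf (Sum.inr i) := by
  unfold TGraph.IsLeaf TGraph.degree
  rw [sum_polyE]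
  have h1 : ∀ j : Fin k, (polygon k).mult (Sum.inr i) (Sum.inl j) = 0 := by
    intro j; unfold TGraph.mult polygon; simp
  have h2 : ∀ j : Fin k, (polygon k).mult (Sum.inr i) (Sum.inr j) = if j = i then 1 else 0 := by
    intro j; unfold TGraph.mult polygon; simp
  simp [h1, h2, Finset.sum_ite_eq']

lemma cprev_val {k : ℕ} (i : Fin k) :
    (cprev i).val = if i.val = 0 then k - 1 else i.val - 1 := by
  have hk := i.pos
  have hi := i.isLt
  show (i.val + (k-1)) % k = _
  split
  · next h => rw [h, Nat.zero_add, Nat.mod_eq_of_lt (by omega)]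
  · next h =>
    have : i.val + (k-1) = (i.val - 1) + k := by omega
    rw [this, Nat.add_mod_right, Nat.mod_eq_of_lt (by omega)]

section main
variable {k : ℕ} (S : Finset (Fin k))

def cfun (i : Fin k) : ℕ := (S.filter (fun j => j.val ≤ i.val)).card

lemma cfun_succ (i : Fin k) (h : i.val ≠ 0) :
    cfun S i = cfun S (cprev i) + (if i ∈ S then 1 else 0) := by
  have hp : (cprev i).val = i.val - 1 := by rw [cprev_val]; simp [h]
  unfold cfun
  have hft : S.filter (fun j => j.val ≤ i.val)
      = S.filter (fun j => j.val ≤ (cprev i).val ∨ j = i) := by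
    apply Finset.filter_congr
    intro j _
    rw [hp, Fin.ext_iff]
    omega
  rw [hft, Finset.filter_or, Finset.card_union_of_disjoint, Finset.filter_eq']
  · split <;> simp
  · rw [Finset.disjoint_filter]
    intro j _ hj hj2
    rw [Fin.ext_iff] at hj2
    omega

lemma cfun_zero (i : Fin k) (h : i.val = 0) :
    cfun S i = (if i ∈ S then 1 else 0) ∧ cfun S (cprev i) = S.card := by
  constructor
  · unfold cfun
    have hft : S.filter (fun j => j.val ≤ i.val) = S.filter (fun j => j = i) := by
      apply Finset.filter_congr
      intro j _
      rw [Fin.ext_iff]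
      omega
    rw [hft, Finset.filter_eq']
    split <;> simp
  · unfold cfun
    rw [Finset.filter_true_of_mem]
    intro j _
    rw [cprev_val]
    simp only [h, if_pos]
    have := j.isLt
    omega

end main


/-- In a polygon graph, the degree-2 element with value 1 on all
cycle edges, 2 on the legs in `S` and 0 on the other legs is a sum of two
networks iff `|S|` is even. -/
theorem degree_two_all_ones_decomposes_iff_even (k : ℕ) (S : Finset (Fin k)) :
    (∃ u w : (polygon k).E → ℤ,
        (polygon k).InCone (1, u) ∧ (polygon k).InCone (1, w) ∧
        (fun e => Sum.elim (fun _ : Fin k => (1 : ℤ))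
          (fun i : Fin k => if i ∈ S then 2 else 0) e) = u + w) ↔
      Even S.card := by
  have vcases : ∀ (P : (polygon k).V → Prop), (∀ i, P (Sum.inl i)) → (∀ i, P (Sum.inr i)) →
      ∀ v, P v := fun P h1 h2 v => Sum.rec h1 h2 v
  have ecases : ∀ (P : (polygon k).E → Prop), (∀ i, P (Sum.inl i)) → (∀ i, P (Sum.inr i)) →
      ∀ e, P e := fun P h1 h2 e => Sum.rec h1 h2 e
  constructor
  · rintro ⟨u, w, hu, hw, heq⟩
    have he : ∀ e, Sum.elim (fun _ : Fin k => (1 : ℤ))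
        (fun i : Fin k => if i ∈ S then 2 else 0) e = u e + w e := by
      intro e
      have := congrFun heq e
      exact this
    have hbS : ∀ i : Fin k, u (Sum.inr i) = if i ∈ S then 1 else 0 := by
      intro i
      have hei := he (Sum.inr i)
      simp only [Sum.elim_inr] at hei
      by_cases hiS : i ∈ S
      · rw [if_pos hiS] at hei ⊢
        obtain ⟨_, htri, hdeg⟩ := hu.2.2 (Sum.inl i) (not_leaf_inl k i)
        obtain ⟨_, htri', hdeg'⟩ := hw.2.2 (Sum.inl i) (not_leaf_inl k i)
        have hmne : (polygon k).mult (Sum.inl i) (Sum.inr i) ≠ 0 := by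
          rw [mult_inl_inr]; simp
        have h1 : 2 * u (Sum.inr i) ≤ (polygon k).vsum (Sum.inl i) u := htri (Sum.inr i) hmne
        have h2 : 2 * w (Sum.inr i) ≤ (polygon k).vsum (Sum.inl i) w := htri' (Sum.inr i) hmne
        have h3 : (polygon k).vsum (Sum.inl i) u ≤ 2 * 1 := hdeg
        have h4 : (polygon k).vsum (Sum.inl i) w ≤ 2 * 1 := hdeg'
        omega
      · rw [if_neg hiS] at hei ⊢
        have h1 : (0:ℤ) ≤ u (Sum.inr i) := hu.2.1 (Sum.inr i)
        have h2 : (0:ℤ) ≤ w (Sum.inr i) := hw.2.1 (Sum.inr i)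
        omega
    have hsum : Even (∑ i : Fin k, (polygon k).vsum (Sum.inl i) u) :=
      Finset.even_sum _ (fun i _ => (hu.2.2 (Sum.inl i) (not_leaf_inl k i)).1)
    have hcp : ∑ i : Fin k, u (Sum.inl (cprev i)) = ∑ i : Fin k, u (Sum.inl i) := by
      have := (cprevEquiv k).sum_comp (fun i => u (Sum.inl i))
      simpa [cprevEquiv] using this
    have hrw : (∑ i : Fin k, (polygon k).vsum (Sum.inl i) u)
        = 2 * (∑ i : Fin k, u (Sum.inl i)) + (S.card : ℤ) := by
      calc ∑ i : Fin k, (polygon k).vsum (Sum.inl i) u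
          = ∑ i : Fin k, (u (Sum.inl i) + u (Sum.inl (cprev i)) + u (Sum.inr i)) :=
            Finset.sum_congr rfl (fun i _ => vsum_inl k i u)
        _ = (∑ i : Fin k, u (Sum.inl i)) + (∑ i : Fin k, u (Sum.inl (cprev i)))
              + (∑ i : Fin k, u (Sum.inr i)) := by
            rw [Finset.sum_add_distrib, Finset.sum_add_distrib]
        _ = 2 * (∑ i : Fin k, u (Sum.inl i)) + (S.card : ℤ) := by
            rw [hcp]
            have hb : (∑ i : Fin k, u (Sum.inr i)) = (S.card : ℤ) := by
              rw [Finset.sum_congr rfl (fun i _ => hbS i)]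
              simp [Finset.sum_ite_mem]
            rw [hb]; ring
    rw [hrw] at hsum
    rw [← Int.even_coe_nat]
    obtain ⟨r, hr⟩ := hsum
    exact ⟨r - (∑ i : Fin k, u (Sum.inl i)), by omega⟩
  · intro hS
    rw [Nat.even_iff] at hS
    set a : Fin k → ℤ := fun i => ((cfun S i % 2 : ℕ) : ℤ) with ha_def
    set b : Fin k → ℤ := fun i => if i ∈ S then 1 else 0 with hb_def
    have key : ∀ i : Fin k, (a i = 0 ∨ a i = 1) ∧ (a (cprev i) = 0 ∨ a (cprev i) = 1) ∧
        (a i + a (cprev i) + b i) % 2 = 0 := by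
      intro i
      by_cases hiS : i ∈ S <;>
      by_cases h0 : i.val = 0
      · obtain ⟨h1, h2⟩ := cfun_zero S i h0
        rw [if_pos hiS] at h1
        simp only [ha_def, hb_def, if_pos hiS]
        omega
      · have h1 := cfun_succ S i h0
        rw [if_pos hiS] at h1
        simp only [ha_def, hb_def, if_pos hiS]
        omega
      · obtain ⟨h1, h2⟩ := cfun_zero S i h0
        rw [if_neg hiS] at h1
        simp only [ha_def, hb_def, if_neg hiS]
        omega
      · have h1 := cfun_succ S i h0
        rw [if_neg hiS] at h1
        simp only [ha_def, hb_def, if_neg hiS]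
        omega
    have hb01 : ∀ i : Fin k, b i = 0 ∨ b i = 1 := by
      intro i; simp only [hb_def]; split <;> simp
    refine ⟨Sum.elim a b, Sum.elim (fun i => 1 - a i) b, ?_, ?_, ?_⟩
    · refine ⟨by norm_num, ?_, ?_⟩
      · show ∀ e : Fin k ⊕ Fin k, 0 ≤ Sum.elim a b e
        refine ecases _ (fun i => ?_) (fun i => ?_)
        · simp only [Sum.elim_inl]; rcases (key i).1 with h | h <;> omega
        · simp only [Sum.elim_inr]; rcases hb01 i with h | h <;> omega
      · refine vcases _ (fun i _ => ?_) (fun i hi => absurd (leaf_inr k i) hi)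
        show Even ((polygon k).vsum (Sum.inl i) (Sum.elim a b)) ∧
          (∀ e, (polygon k).mult (Sum.inl i) e ≠ 0 →
            2 * (Sum.elim a b) e ≤ (polygon k).vsum (Sum.inl i) (Sum.elim a b)) ∧
          (polygon k).vsum (Sum.inl i) (Sum.elim a b) ≤ 2 * 1
        erw [vsum_inl]
        simp only [Sum.elim_inl, Sum.elim_inr]
        obtain ⟨hx, hy, hpar⟩ := key i
        have hbz := hb01 i
        refine ⟨Int.even_iff.mpr (by omega), ?_, by omega⟩
        refine ecases _ (fun j hj => ?_) (fun j hj => ?_)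
        · rw [mult_inl_inl] at hj
          simp only [Sum.elim_inl]
          by_cases h1 : j = i
          · subst h1; omega
          · by_cases h2 : j = cprev i
            · subst h2; omega
            · rw [if_neg h1, if_neg h2] at hj; omega
        · rw [mult_inl_inr] at hj
          simp only [Sum.elim_inr]
          by_cases h1 : j = i
          · subst h1; omega
          · rw [if_neg h1] at hj; omega
    · refine ⟨by norm_num, ?_, ?_⟩
      · show ∀ e : Fin k ⊕ Fin k, 0 ≤ Sum.elim (fun i => 1 - a i) b e
        refine ecases _ (fun i => ?_) (fun i => ?_)
        · simp only [Sum.elim_inl]; rcases (key i).1 with h | h <;> omega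
        · simp only [Sum.elim_inr]; rcases hb01 i with h | h <;> omega
      · refine vcases _ (fun i _ => ?_) (fun i hi => absurd (leaf_inr k i) hi)
        show Even ((polygon k).vsum (Sum.inl i) (Sum.elim (fun i => 1 - a i) b)) ∧
          (∀ e, (polygon k).mult (Sum.inl i) e ≠ 0 →
            2 * (Sum.elim (fun i => 1 - a i) b) e
              ≤ (polygon k).vsum (Sum.inl i) (Sum.elim (fun i => 1 - a i) b)) ∧
          (polygon k).vsum (Sum.inl i) (Sum.elim (fun i => 1 - a i) b) ≤ 2 * 1
        erw [vsum_inl]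
        simp only [Sum.elim_inl, Sum.elim_inr]
        obtain ⟨hx, hy, hpar⟩ := key i
        have hbz := hb01 i
        refine ⟨Int.even_iff.mpr (by omega), ?_, by omega⟩
        refine ecases _ (fun j hj => ?_) (fun j hj => ?_)
        · rw [mult_inl_inl] at hj
          simp only [Sum.elim_inl]
          by_cases h1 : j = i
          · subst h1; omega
          · by_cases h2 : j = cprev i
            · subst h2; omega
            · rw [if_neg h1, if_neg h2] at hj; omega
        · rw [mult_inl_inr] at hj
          simp only [Sum.elim_inr]
          by_cases h1 : j = i
          · subst h1; omega
          · rw [if_neg h1] at hj; omega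
    · funext e
      refine ecases (fun e => Sum.elim (fun _ : Fin k => (1:ℤ))
        (fun i => if i ∈ S then 2 else 0) e = (Sum.elim a b + Sum.elim (fun i => 1 - a i) b) e)
        (fun i => ?_) (fun i => ?_) e
      · simp [Pi.add_apply]
      · simp only [Pi.add_apply, Sum.elim_inr, hb_def]
        split <;> norm_num
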